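/- Let V satisfy Assumption (V) with exponent m > 0 and let (φ^t) be the Hamiltonian flow of p(x,ξ) = V(x) + |ξ|²/2, φ^t(ρ) = (x^t(ρ), ξ^t(ρ)). (i) If m ≥ 1/2, there exist C > 0 and E₀ > 0 such that for all E ≥ E₀, all r ≥ 0 and all ρ with p(ρ) = E: the Lebesgue measure of {t ∈ [0, E^{(1/2)(1/m − 1)}] : |x^t(ρ)| < r} is at most C·r/√E. (ii) If m < 1/2, then for every ε ∈ (0, (1/2)(1/m − 1)) there exist C > 0 and E₀ > 0 such that for all E ≥ E₀, all r ≥ 0 and all ρ with p(ρ) = E: the Lebesgue measure of {t ∈ [0, E^{(1/2)(1/m − 1) − ε}] : |x^t(ρ)| < r} is at most C·r/√E. -/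

import Mathlib

noncomputable section

open MeasureTheory
open scoped RealInnerProductSpace

set_option maxHeartbeats 1000000

/-- The Japanese bracket `⟨x⟩ = (1 + |x|²)^{1/2}`. -/
def jap {E : Type*} [NormedAddCommGroup E] (x : E) : ℝ := Real.sqrt (1 + ‖x‖ ^ 2)

/-- `φ` is the (globally defined) Hamiltonian flow of `p(x,ξ) = V(x) + |ξ|²/2`:
writing `φᵗ(ρ) = (xᵗ, ξᵗ)`, one has `(d/dt) xᵗ = ξᵗ`, `(d/dt) ξᵗ = -∇V(xᵗ)`, `φ⁰(ρ) = ρ`. -/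
def IsFlowV (d : ℕ) (V : EuclideanSpace ℝ (Fin d) → ℝ)
    (φ : ℝ → EuclideanSpace ℝ (Fin d) × EuclideanSpace ℝ (Fin d) →
      EuclideanSpace ℝ (Fin d) × EuclideanSpace ℝ (Fin d)) : Prop :=
  (∀ ρ, φ 0 ρ = ρ) ∧ ∀ ρ t,
    HasDerivAt (fun s => (φ s ρ).1) ((φ t ρ).2) t ∧
    HasDerivAt (fun s => (φ s ρ).2) (-gradient V ((φ t ρ).1)) t

private lemma jap_pos' {E : Type*} [NormedAddCommGroup E] (x : E) : 0 < jap x :=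
  Real.sqrt_pos.2 (by positivity)

private lemma one_le_jap' {E : Type*} [NormedAddCommGroup E] (x : E) : 1 ≤ jap x :=
  (Real.le_sqrt zero_le_one (by positivity)).2 (by nlinarith [sq_nonneg ‖x‖])

private lemma jap_sq' {E : Type*} [NormedAddCommGroup E] (x : E) : jap x ^ 2 = 1 + ‖x‖ ^ 2 :=
  Real.sq_sqrt (by positivity)

private lemma norm_le_jap' {E : Type*} [NormedAddCommGroup E] (x : E) : ‖x‖ ≤ jap x :=
  (Real.le_sqrt (norm_nonneg x) (by positivity)).2 (by nlinarith)

private lemma jap_rpow' {E : Type*} [NormedAddCommGroup E] (x : E) (m : ℝ) :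
    jap x ^ (2 * m) = (jap x ^ 2) ^ m := by
  rw [← Real.rpow_natCast (jap x) 2, ← Real.rpow_mul (jap_pos' x).le]
  norm_num

private lemma lipbd {X : Type*} [NormedAddCommGroup X] [NormedSpace ℝ X]
    {g g' : ℝ → X} (h : ∀ t, HasDerivAt g (g' t) t) {L : ℝ}
    (hL : ∀ t, ‖g' t‖ ≤ L) (s t : ℝ) : ‖g t - g s‖ ≤ L * |t - s| := by
  rcases le_total s t with hst | hst
  · have h2 := norm_image_sub_le_of_norm_deriv_le_segment'
      (f := g) (f' := g') (a := s) (b := t)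
      (fun u _ => (h u).hasDerivWithinAt) (fun u _ => hL u) t (Set.right_mem_Icc.2 hst)
    rwa [abs_of_nonneg (sub_nonneg.2 hst)]
  · have h2 := norm_image_sub_le_of_norm_deriv_le_segment'
      (f := g) (f' := g') (a := t) (b := s)
      (fun u _ => (h u).hasDerivWithinAt) (fun u _ => hL u) s (Set.right_mem_Icc.2 hst)
    rw [norm_sub_rev] at h2
    rw [abs_of_nonpos (sub_nonpos.2 hst)]
    linarith

private lemma cover_helper {τ : ℝ} (hτ : 0 < τ) {N : ℕ} (hN : 0 < N) {t : ℝ}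
    (h0 : 0 ≤ t) (h1 : t ≤ N * τ) :
    ∃ k < N, (k : ℝ) * τ ≤ t ∧ t ≤ ((k : ℝ) + 1) * τ := by
  by_cases hfl : ⌊t / τ⌋₊ < N
  · refine ⟨⌊t / τ⌋₊, hfl, ?_, ?_⟩
    · have h2 : (⌊t / τ⌋₊ : ℝ) ≤ t / τ := Nat.floor_le (div_nonneg h0 hτ.le)
      calc (⌊t / τ⌋₊ : ℝ) * τ ≤ (t / τ) * τ := by nlinarith
        _ = t := by field_simp
    · have h2 : t / τ < ⌊t / τ⌋₊ + 1 := Nat.lt_floor_add_one _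
      have := (div_lt_iff₀ hτ).mp h2
      linarith
  · push_neg at hfl
    refine ⟨N - 1, Nat.sub_lt hN one_pos, ?_, ?_⟩
    · have h2 : (N : ℝ) ≤ ⌊t / τ⌋₊ := Nat.cast_le.2 hfl
      have h3 : (⌊t / τ⌋₊ : ℝ) ≤ t / τ := Nat.floor_le (div_nonneg h0 hτ.le)
      have h4 : ((N - 1 : ℕ) : ℝ) ≤ (N : ℝ) := by exact_mod_cast Nat.cast_le.2 (Nat.sub_le N 1)
      have h5 : (N : ℝ) * τ ≤ t := by
        have := h2.trans h3
        calc (N : ℝ) * τ ≤ (t / τ) * τ := by nlinarith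
          _ = t := by field_simp
      nlinarith
    · have h4 : ((N - 1 : ℕ) : ℝ) + 1 = (N : ℝ) := by
        have := Nat.succ_pred_eq_of_pos hN
        exact_mod_cast congrArg (Nat.cast : ℕ → ℝ) this
      rw [h4]; exact h1

private lemma master (d : ℕ) (m : ℝ) (hm : 0 < m)
    (V : EuclideanSpace ℝ (Fin d) → ℝ) (hVsmooth : ContDiff ℝ (⊤ : ℕ∞) V)
    (hVell : ∃ C : ℝ, 1 ≤ C ∧ ∃ r₀ > 0, ∀ x, r₀ ≤ ‖x‖ →
      C⁻¹ * jap x ^ (2 * m) ≤ V x ∧ V x ≤ C * jap x ^ (2 * m))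
    (hVder : ∀ k : ℕ, ∃ Ck > 0, ∀ x,
      ‖iteratedFDeriv ℝ k V x‖ ≤ Ck * jap x ^ (2 * m - k))
    (φ : ℝ → EuclideanSpace ℝ (Fin d) × EuclideanSpace ℝ (Fin d) →
      EuclideanSpace ℝ (Fin d) × EuclideanSpace ℝ (Fin d))
    (hφ : IsFlowV d V φ) :
    ∃ C > 0, ∃ E₀ > 0, ∀ β : ℝ, β ≤ (1 / 2 : ℝ) * (1 / m - 1) → ∀ E : ℝ, E₀ ≤ E →
      ∀ r : ℝ, 0 ≤ r → ∀ ρ : EuclideanSpace ℝ (Fin d) × EuclideanSpace ℝ (Fin d),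
        V ρ.1 + ‖ρ.2‖ ^ 2 / 2 = E →
        volume {t : ℝ | t ∈ Set.Icc 0 (E ^ β) ∧ ‖(φ t ρ).1‖ < r}
          ≤ ENNReal.ofReal (C * r / Real.sqrt E) := by
  obtain ⟨hφ0, hφd⟩ := hφ
  obtain ⟨C, hC1, r₀, hr₀pos, hell⟩ := hVell
  obtain ⟨C₁, hC₁pos, hgrad1⟩ := hVder 1
  obtain ⟨M, hM⟩ := (isCompact_closedBall (0 : EuclideanSpace ℝ (Fin d)) r₀).exists_bound_of_continuousOn
    (hVsmooth.continuous.continuousOn)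
  have hCpos : (0:ℝ) < C := lt_of_lt_of_le one_pos hC1
  set M₀ : ℝ := max M 0 with hM₀def
  have hM₀ : 0 ≤ M₀ := le_max_right _ _
  set C₂ : ℝ := C + M₀ with hC₂def
  have hC₂pos : 0 < C₂ := by linarith
  set C₃ : ℝ := 2 * C₂ + C₁ with hC₃def
  have hC₃pos : 0 < C₃ := by linarith
  set K : ℝ := C₃ ^ (1 / (2 * m)) with hKdef
  have hKpos : 0 < K := Real.rpow_pos_of_pos hC₃pos _
  set N : ℕ := ⌈8 * K⌉₊ with hNdef
  have hNpos : 0 < N := Nat.ceil_pos.2 (by positivity)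
  have hN8K : 8 * K ≤ (N : ℝ) := Nat.le_ceil _
  set Cf : ℝ := 4 * K + 8 * N with hCfdef
  have hCfpos : 0 < Cf := by positivity
  have h2m : (0:ℝ) < (2:ℝ) ^ (m:ℝ) := Real.rpow_pos_of_pos two_pos m
  set E₀ : ℝ := 1 + M₀ + C₃ * (2 : ℝ) ^ (m:ℝ) with hE₀def
  have hE₀pos : 0 < E₀ := by linarith [mul_pos hC₃pos h2m]
  -- global bounds on V and its gradient
  have hVub : ∀ y, V y ≤ C₂ * jap y ^ (2 * m) := by
    intro y
    have hjp : (0:ℝ) < jap y ^ (2*m) := Real.rpow_pos_of_pos (jap_pos' y) _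
    have hj1 : (1:ℝ) ≤ jap y ^ (2*m) := Real.one_le_rpow (one_le_jap' y) (by positivity)
    rw [hC₂def, add_mul]
    have hM₀J : M₀ ≤ M₀ * jap y ^ (2*m) := le_mul_of_one_le_right hM₀ hj1
    have hCJ : (0:ℝ) ≤ C * jap y ^ (2*m) := mul_nonneg hCpos.le hjp.le
    have hM₀J0 : (0:ℝ) ≤ M₀ * jap y ^ (2*m) := mul_nonneg hM₀ hjp.le
    by_cases hy : r₀ ≤ ‖y‖
    · have h2 := (hell y hy).2
      linarith
    · have hy' : y ∈ Metric.closedBall (0 : EuclideanSpace ℝ (Fin d)) r₀ := by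
        simpa [Metric.mem_closedBall, dist_zero_right] using (le_of_not_ge hy)
      have h2 := hM y hy'
      have h3 : V y ≤ M := (le_abs_self _).trans (by simpa [Real.norm_eq_abs] using h2)
      have h4 : M ≤ M₀ := le_max_left _ _
      linarith
  have hVlb : ∀ y, -M₀ ≤ V y := by
    intro y
    by_cases hy : r₀ ≤ ‖y‖
    · have h2 := (hell y hy).1
      have hjp : (0:ℝ) < jap y ^ (2*m) := Real.rpow_pos_of_pos (jap_pos' y) _
      have h3 : (0:ℝ) ≤ C⁻¹ * jap y ^ (2*m) := by positivity
      linarith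
    · have hy' : y ∈ Metric.closedBall (0 : EuclideanSpace ℝ (Fin d)) r₀ := by
        simpa [Metric.mem_closedBall, dist_zero_right] using (le_of_not_ge hy)
      have h2 : |V y| ≤ M := by simpa [Real.norm_eq_abs] using hM y hy'
      have h3 := (abs_le.1 h2).1
      have h4 : M ≤ M₀ := le_max_left _ _
      linarith
  have hgradb : ∀ y, |⟪y, gradient V y⟫| ≤ C₁ * jap y ^ (2 * m) := by
    intro y
    have h1 : ‖gradient V y‖ = ‖iteratedFDeriv ℝ 1 V y‖ := by
      rw [gradient, LinearIsometryEquiv.norm_map, ← norm_iteratedFDeriv_fderiv (n := 0),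
        norm_iteratedFDeriv_zero]
    have h2 : ‖gradient V y‖ ≤ C₁ * jap y ^ (2 * m - 1) := by
      rw [h1]; simpa using hgrad1 y
    have h3 : |⟪y, gradient V y⟫| ≤ ‖y‖ * ‖gradient V y‖ := abs_real_inner_le_norm _ _
    have h4 : ‖y‖ * ‖gradient V y‖ ≤ jap y * (C₁ * jap y ^ (2*m-1)) :=
      mul_le_mul (norm_le_jap' y) h2 (norm_nonneg _) (jap_pos' y).le
    have h5 : jap y * (C₁ * jap y ^ (2*m-1)) = C₁ * jap y ^ (2*m) := by
      rw [show (2*m : ℝ) = 1 + (2*m-1) by ring, Real.rpow_add (jap_pos' y), Real.rpow_one]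
      ring
    linarith
  refine ⟨Cf, hCfpos, E₀, hE₀pos, ?_⟩
  intro β hβ E hE r hr ρ hρE
  have hm' : m ≠ 0 := ne_of_gt hm
  have hC₃E : C₃ * (2:ℝ) ^ (m:ℝ) ≤ E := by linarith only [hE, hE₀def, hM₀, mul_pos hC₃pos h2m]
  have hE1 : (1:ℝ) ≤ E := by linarith only [hE, hE₀def, hM₀, mul_pos hC₃pos h2m]
  have hEpos : (0:ℝ) < E := lt_of_lt_of_le one_pos hE1
  have hsEpos : 0 < Real.sqrt E := Real.sqrt_pos.2 hEpos
  have hEs : Real.sqrt E * Real.sqrt E = E := Real.mul_self_sqrt hEpos.le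
  have hME : M₀ ≤ E := by linarith only [hE, hE₀def, hM₀, mul_pos hC₃pos h2m]
  -- trajectory derivatives
  have hderx : ∀ t, HasDerivAt (fun s => (φ s ρ).1) ((φ t ρ).2) t := fun t => (hφd ρ t).1
  have hderξ : ∀ t, HasDerivAt (fun s => (φ s ρ).2) (-gradient V ((φ t ρ).1)) t :=
    fun t => (hφd ρ t).2
  -- energy conservation
  have hgradAt : ∀ y, HasGradientAt V (gradient V y) y :=
    fun y => ((hVsmooth.differentiable (by simp)) y).hasGradientAt
  have hVcomp : ∀ t, HasDerivAt (fun s => V ((φ s ρ).1))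
      ⟪gradient V ((φ t ρ).1), (φ t ρ).2⟫ t := by
    intro t
    have h := ((hgradAt ((φ t ρ).1)).hasFDerivAt).comp_hasDerivAt t (hderx t)
    exact h
  have hcons : ∀ t, V ((φ t ρ).1) + ‖(φ t ρ).2‖ ^ 2 / 2 = E := by
    have hede : ∀ t, HasDerivAt (fun s => V ((φ s ρ).1) + ⟪(φ s ρ).2, (φ s ρ).2⟫ / 2) 0 t := by
      intro t
      have h2 : HasDerivAt (fun s => ⟪(φ s ρ).2, (φ s ρ).2⟫)
          (⟪(φ t ρ).2, -gradient V ((φ t ρ).1)⟫ + ⟪-gradient V ((φ t ρ).1), (φ t ρ).2⟫) t :=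
        HasDerivAt.inner ℝ (hderξ t) (hderξ t)
      have h3 := (hVcomp t).add (h2.div_const 2)
      have h4 : ⟪gradient V ((φ t ρ).1), (φ t ρ).2⟫ +
          (⟪(φ t ρ).2, -gradient V ((φ t ρ).1)⟫ + ⟪-gradient V ((φ t ρ).1), (φ t ρ).2⟫) / 2
          = 0 := by
        rw [inner_neg_right, inner_neg_left,
          real_inner_comm ((φ t ρ).2) (gradient V ((φ t ρ).1))]
        ring
      rw [h4] at h3
      exact h3
    have hconst := is_const_of_deriv_eq_zero
      (f := fun s => V ((φ s ρ).1) + ⟪(φ s ρ).2, (φ s ρ).2⟫ / 2)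
      (fun s => (hede s).differentiableAt) (fun s => (hede s).deriv)
    intro t
    have h0 := hconst t 0
    simp only [hφ0 ρ, real_inner_self_eq_norm_sq] at h0
    rw [hρE] at h0
    exact h0
  -- speed bound
  have hsp : ∀ t, ‖(φ t ρ).2‖ ≤ 2 * Real.sqrt E := by
    intro t
    have h1 := hcons t
    have h2 := hVlb ((φ t ρ).1)
    have hsp2 : ‖(φ t ρ).2‖ ^ 2 ≤ 4 * E := by linarith only [h1, h2, hME]
    have h3 : ‖(φ t ρ).2‖ = Real.sqrt (‖(φ t ρ).2‖^2) := (Real.sqrt_sq (norm_nonneg _)).symm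
    have h4 : Real.sqrt (4 * E) = 2 * Real.sqrt E := by
      rw [show (4:ℝ) * E = (2:ℝ)^2 * E by ring, Real.sqrt_mul (by positivity) E,
        Real.sqrt_sq (by norm_num : (0:ℝ) ≤ 2)]
    rw [h3, ← h4]
    exact Real.sqrt_le_sqrt hsp2
  have hlip : ∀ s t : ℝ, ‖(φ t ρ).1 - (φ s ρ).1‖ ≤ (2 * Real.sqrt E) * |t - s| :=
    lipbd hderx hsp
  -- the good region
  set Q : ℝ := (E / C₃) ^ (1/m : ℝ) with hQdef
  have hQpos : 0 < Q := Real.rpow_pos_of_pos (by positivity) _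
  have hQ2 : 2 ≤ Q := by
    have h1 : (2:ℝ) ^ (m:ℝ) ≤ E / C₃ := (le_div_iff₀ hC₃pos).2 (by
      rw [mul_comm] at hC₃E; exact hC₃E)
    have h2 : ((2:ℝ) ^ (m:ℝ)) ^ (1/m : ℝ) ≤ Q :=
      Real.rpow_le_rpow (by positivity) h1 (by positivity)
    rwa [← Real.rpow_mul (by norm_num : (0:ℝ) ≤ 2), mul_one_div, div_self (ne_of_gt hm),
      Real.rpow_one] at h2
  set R₂ : ℝ := Real.sqrt (Q / 2) with hR₂def
  have hR₂pos : 0 < R₂ := Real.sqrt_pos.2 (by linarith)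
  have hsqrtQ : Real.sqrt Q = E ^ (1/(2*m) : ℝ) / K := by
    rw [hQdef, Real.sqrt_eq_rpow, ← Real.rpow_mul (by positivity : (0:ℝ) ≤ E / C₃),
      show (1/m * (1/2) : ℝ) = 1/(2*m) by rw [div_mul_div_comm, one_mul, mul_comm],
      Real.div_rpow hEpos.le hC₃pos.le, hKdef]
  have hregion : ∀ y : EuclideanSpace ℝ (Fin d), ‖y‖ ≤ R₂ → C₃ * jap y ^ (2*m) ≤ E := by
    intro y hy
    have h1 : ‖y‖^2 ≤ Q/2 := by
      have h0 := pow_le_pow_left₀ (norm_nonneg y) hy 2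
      rwa [hR₂def, Real.sq_sqrt (by linarith : (0:ℝ) ≤ Q/2)] at h0
    have h2 : jap y ^ 2 ≤ Q := by rw [jap_sq']; linarith
    have h3 : jap y ^ (2*m) ≤ Q ^ m := by
      rw [jap_rpow']
      exact Real.rpow_le_rpow (by positivity) h2 hm.le
    have h4 : Q ^ m = E / C₃ := by
      rw [hQdef, ← Real.rpow_mul (by positivity : (0:ℝ) ≤ E/C₃),
        one_div_mul_cancel (ne_of_gt hm), Real.rpow_one]
    have h5 : C₃ * jap y ^ (2*m) ≤ C₃ * (E/C₃) :=
      mul_le_mul_of_nonneg_left (h4 ▸ h3) hC₃pos.le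
    calc C₃ * jap y ^ (2*m) ≤ C₃ * (E/C₃) := h5
      _ = E := by field_simp
  -- the escape function f = <x, xi>
  have hderf : ∀ t, HasDerivAt (fun s => ⟪(φ s ρ).1, (φ s ρ).2⟫)
      (⟪(φ t ρ).1, -gradient V ((φ t ρ).1)⟫ + ⟪(φ t ρ).2, (φ t ρ).2⟫) t :=
    fun t => HasDerivAt.inner ℝ (hderx t) (hderξ t)
  have hf'_ge : ∀ t, ‖(φ t ρ).1‖ ≤ R₂ →
      E ≤ ⟪(φ t ρ).1, -gradient V ((φ t ρ).1)⟫ + ⟪(φ t ρ).2, (φ t ρ).2⟫ := by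
    intro t ht
    have h1 := hregion _ ht
    rw [hC₃def] at h1
    have h2 := (abs_le.1 (hgradb ((φ t ρ).1))).2
    have h3 := hVub ((φ t ρ).1)
    have h4 := hcons t
    have h5 : ⟪(φ t ρ).2, (φ t ρ).2⟫ = ‖(φ t ρ).2‖^2 := real_inner_self_eq_norm_sq _
    have h6 : ⟪(φ t ρ).1, -gradient V ((φ t ρ).1)⟫
        = -⟪(φ t ρ).1, gradient V ((φ t ρ).1)⟫ := inner_neg_right _ _
    rw [h5, h6]
    linarith only [h1, h2, h3, h4]
  have hfbd : ∀ t, ‖(φ t ρ).1‖ < r →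
      |⟪(φ t ρ).1, (φ t ρ).2⟫| ≤ r * (2 * Real.sqrt E) := by
    intro t ht
    have h1 := abs_real_inner_le_norm ((φ t ρ).1) ((φ t ρ).2)
    have h2 : ‖(φ t ρ).1‖ * ‖(φ t ρ).2‖ ≤ r * (2 * Real.sqrt E) :=
      mul_le_mul ht.le (hsp t) (norm_nonneg _) hr
    linarith only [h1, h2]
  -- the time interval
  have hTmax : E ^ β ≤ E ^ ((1/2 : ℝ) * (1/m - 1)) := Real.rpow_le_rpow_of_exponent_le hE1 hβ
  have hTmax_eq : E ^ ((1/2 : ℝ) * (1/m - 1)) = E ^ (1/(2*m) : ℝ) / Real.sqrt E := by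
    rw [Real.sqrt_eq_rpow, ← Real.rpow_sub hEpos]
    congr 1
    field_simp
  have hE2mK : E ^ (1/(2*m) : ℝ) = Real.sqrt Q * K := by
    rw [hsqrtQ]; field_simp
  have hsqrt2 : Real.sqrt 2 ≤ 2 := by
    nlinarith [Real.sq_sqrt (by norm_num : (0:ℝ) ≤ 2), Real.sqrt_nonneg 2]
  have hsqrtQ_le : Real.sqrt Q ≤ 2 * R₂ := by
    have h1 : Real.sqrt Q = R₂ * Real.sqrt 2 := by
      rw [hR₂def, ← Real.sqrt_mul (by linarith : (0:ℝ) ≤ Q/2)]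
      congr 1; ring
    rw [h1]
    nlinarith [hR₂pos]
  set A : Set ℝ := {t : ℝ | t ∈ Set.Icc 0 (E ^ β) ∧ ‖(φ t ρ).1‖ < r} with hAdef
  by_cases hcase : R₂ ≤ 2 * r
  · -- trivial case: r is comparable to the size of the classically allowed region
    have h1 : A ⊆ Set.Icc 0 (E ^ β) := fun t ht => ht.1
    have h2 : volume A ≤ ENNReal.ofReal (E ^ β) := by
      calc volume A ≤ volume (Set.Icc 0 (E ^ β)) := measure_mono h1
        _ = ENNReal.ofReal (E ^ β - 0) := Real.volume_Icc
        _ = ENNReal.ofReal (E ^ β) := by rw [sub_zero]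
    refine h2.trans (ENNReal.ofReal_le_ofReal ?_)
    have h3 : E ^ (1/(2*m):ℝ) ≤ 4 * K * r := by
      rw [hE2mK]
      calc Real.sqrt Q * K ≤ (2*R₂) * K :=
            mul_le_mul_of_nonneg_right hsqrtQ_le hKpos.le
        _ ≤ (2*(2*r)) * K := by
            have := mul_le_mul_of_nonneg_right (by linarith : 2*R₂ ≤ 2*(2*r)) hKpos.le
            linarith
        _ = 4 * K * r := by ring
    calc E ^ β ≤ E ^ ((1/2:ℝ)*(1/m-1)) := hTmax
      _ = E ^ (1/(2*m):ℝ) / Real.sqrt E := hTmax_eq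
      _ ≤ (4*K*r) / Real.sqrt E := by gcongr
      _ ≤ Cf * r / Real.sqrt E := by
        have h4 : 4*K*r ≤ Cf*r := by
          rw [hCfdef]
          have h5 : (0:ℝ) ≤ 8*(N:ℝ)*r := by positivity
          linarith
        gcongr
  · -- main case: window decomposition
    push_neg at hcase
    set L : ℝ := 2 * Real.sqrt E with hLdef
    have hLpos : 0 < L := by positivity
    set τ : ℝ := R₂ / (2 * L) with hτdef
    have hτpos : 0 < τ := by positivity
    have hNτ : E ^ β ≤ N * τ := by
      have h2 : Real.sqrt Q * K ≤ 2 * R₂ * K := by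
        have := mul_le_mul_of_nonneg_right hsqrtQ_le hKpos.le
        linarith
      have h1 : E ^ ((1/2:ℝ)*(1/m-1)) ≤ 8 * K * τ := by
        rw [hTmax_eq, hE2mK]
        calc Real.sqrt Q * K / Real.sqrt E ≤ (2 * R₂ * K) / Real.sqrt E := by gcongr
          _ = 8 * K * τ := by rw [hτdef, hLdef]; field_simp; ring
      have h3 : 8 * K * τ ≤ N * τ := mul_le_mul_of_nonneg_right hN8K hτpos.le
      linarith
    have hwin_sub : A ⊆ ⋃ k ∈ Finset.range N, (A ∩ Set.Icc ((k:ℝ)*τ) (((k:ℝ)+1)*τ)) := by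
      intro t ht
      obtain ⟨k, hk, hk1, hk2⟩ := cover_helper hτpos hNpos ht.1.1 (ht.1.2.trans hNτ)
      exact Set.mem_biUnion (Finset.mem_range.2 hk) ⟨ht, hk1, hk2⟩
    have hwin : ∀ k : ℕ, volume (A ∩ Set.Icc ((k:ℝ)*τ) (((k:ℝ)+1)*τ))
        ≤ ENNReal.ofReal (8 * r / Real.sqrt E) := by
      intro k
      rcases Set.eq_empty_or_nonempty (A ∩ Set.Icc ((k:ℝ)*τ) (((k:ℝ)+1)*τ)) with hem | ⟨t₀, ht₀⟩
      · rw [hem]; simp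
      · have hW : ∀ t ∈ Set.Icc ((k:ℝ)*τ) (((k:ℝ)+1)*τ), ‖(φ t ρ).1‖ ≤ R₂ := by
          intro t htW
          have hd : |t - t₀| ≤ τ := by
            rw [abs_le]
            obtain ⟨h1, h2⟩ := htW
            obtain ⟨h3, h4⟩ := ht₀.2
            constructor <;> linarith
          have h5 := hlip t₀ t
          rw [hLdef] at h5
          have h6 : ‖(φ t ρ).1‖ - ‖(φ t₀ ρ).1‖ ≤ ‖(φ t ρ).1 - (φ t₀ ρ).1‖ := norm_sub_norm_le _ _
          have h7 : (2*Real.sqrt E) * |t - t₀| ≤ (2*Real.sqrt E) * τ :=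
            mul_le_mul_of_nonneg_left hd (by positivity)
          have h8 : (2*Real.sqrt E) * τ = R₂ / 2 := by
            rw [hτdef, hLdef]; field_simp
          have h9 : ‖(φ t₀ ρ).1‖ < r := ht₀.1.2
          linarith only [h5, h6, h7, h8, h9, hcase, hd, hLdef]
        have hd2 : ∀ u : ℝ, HasDerivAt (fun s => ⟪(φ s ρ).1, (φ s ρ).2⟫ - E * s)
            ((⟪(φ u ρ).1, -gradient V ((φ u ρ).1)⟫ + ⟪(φ u ρ).2, (φ u ρ).2⟫) - E) u := by
          intro u
          have h1 : HasDerivAt (fun s : ℝ => E * s) E u := by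
            simpa using (hasDerivAt_id u).const_mul E
          exact (hderf u).sub h1
        have hmono : MonotoneOn (fun s => ⟪(φ s ρ).1, (φ s ρ).2⟫ - E * s)
            (Set.Icc ((k:ℝ)*τ) (((k:ℝ)+1)*τ)) := by
          apply monotoneOn_of_deriv_nonneg (convex_Icc _ _)
          · exact fun u _ => ((hd2 u).differentiableAt).continuousAt.continuousWithinAt
          · exact fun u _ => ((hd2 u).differentiableAt).differentiableWithinAt
          · intro u hu
            rw [(hd2 u).deriv]
            rw [interior_Icc] at hu
            have := hf'_ge u (hW u (Set.Ioo_subset_Icc_self hu))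
            linarith only [this]
        have hBd : ∀ t, t ∈ A ∩ Set.Icc ((k:ℝ)*τ) (((k:ℝ)+1)*τ) →
            E * |t - t₀| ≤ 4 * r * Real.sqrt E := by
          intro t ht
          have h1 := abs_le.1 (hfbd t ht.1.2)
          have h2 := abs_le.1 (hfbd t₀ ht₀.1.2)
          rw [hLdef] at h1 h2
          rcases le_total t t₀ with hle | hle
          · have h3 := hmono ht.2 ht₀.2 hle
            simp only [] at h3
            rw [abs_of_nonpos (by linarith only [hle] : t - t₀ ≤ 0)]
            linarith only [h1.1, h1.2, h2.1, h2.2, h3, hLdef]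
          · have h3 := hmono ht₀.2 ht.2 hle
            simp only [] at h3
            rw [abs_of_nonneg (by linarith only [hle] : (0:ℝ) ≤ t - t₀)]
            linarith only [h1.1, h1.2, h2.1, h2.2, h3, hLdef]
        have hsub2 : A ∩ Set.Icc ((k:ℝ)*τ) (((k:ℝ)+1)*τ) ⊆
            Set.Icc (t₀ - 4*r/Real.sqrt E) (t₀ + 4*r/Real.sqrt E) := by
          intro t ht
          have hB := hBd t ht
          have h1 : |t - t₀| ≤ 4*r/Real.sqrt E := by
            rw [le_div_iff₀ hsEpos]
            have h3 : |t - t₀| * Real.sqrt E * Real.sqrt E ≤ (4*r) * Real.sqrt E := by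
              calc |t - t₀| * Real.sqrt E * Real.sqrt E = E * |t - t₀| := by
                    rw [mul_assoc, hEs]; ring
                _ ≤ 4*r*Real.sqrt E := hB
            exact le_of_mul_le_mul_right h3 hsEpos
          rw [abs_le] at h1
          exact ⟨by linarith only [h1.1], by linarith only [h1.2]⟩
        calc volume (A ∩ Set.Icc ((k:ℝ)*τ) (((k:ℝ)+1)*τ))
            ≤ volume (Set.Icc (t₀ - 4*r/Real.sqrt E) (t₀ + 4*r/Real.sqrt E)) :=
              measure_mono hsub2
          _ = ENNReal.ofReal ((t₀ + 4*r/Real.sqrt E) - (t₀ - 4*r/Real.sqrt E)) := Real.volume_Icc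
          _ = ENNReal.ofReal (8 * r / Real.sqrt E) := by congr 1; ring
    have hsum : volume A ≤ ∑ k ∈ Finset.range N,
        volume (A ∩ Set.Icc ((k:ℝ)*τ) (((k:ℝ)+1)*τ)) :=
      (measure_mono hwin_sub).trans (measure_biUnion_finset_le _ _)
    have hsum2 : ∑ k ∈ Finset.range N, volume (A ∩ Set.Icc ((k:ℝ)*τ) (((k:ℝ)+1)*τ))
        ≤ ∑ _k ∈ Finset.range N, ENNReal.ofReal (8 * r / Real.sqrt E) :=
      Finset.sum_le_sum (fun k _ => hwin k)
    have hsum3 : ∑ _k ∈ Finset.range N, ENNReal.ofReal (8 * r / Real.sqrt E)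
        = ENNReal.ofReal ((N : ℝ) * (8 * r / Real.sqrt E)) := by
      rw [Finset.sum_const, Finset.card_range, nsmul_eq_mul,
        ENNReal.ofReal_mul (Nat.cast_nonneg N), ENNReal.ofReal_natCast]
    calc volume A ≤ ∑ k ∈ Finset.range N, volume (A ∩ Set.Icc ((k:ℝ)*τ) (((k:ℝ)+1)*τ)) := hsum
      _ ≤ ∑ _k ∈ Finset.range N, ENNReal.ofReal (8 * r / Real.sqrt E) := hsum2
      _ = ENNReal.ofReal ((N : ℝ) * (8 * r / Real.sqrt E)) := hsum3
      _ ≤ ENNReal.ofReal (Cf * r / Real.sqrt E) := by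
        apply ENNReal.ofReal_le_ofReal
        have h1 : (N:ℝ) * (8*r/Real.sqrt E) = (8*(N:ℝ))*r/Real.sqrt E := by ring
        rw [h1]
        have h2 : (8:ℝ)*(N:ℝ) ≤ Cf := by rw [hCfdef]; nlinarith
        gcongr

/-- Time spent in a spatial ball by high-energy Hamiltonian trajectories of
`p = V(x) + |ξ|²/2`, for a potential `V` satisfying Assumption (V) with exponent `m > 0`. -/
theorem stmt_3 (d : ℕ) (m : ℝ) (hm : 0 < m)
    (V : EuclideanSpace ℝ (Fin d) → ℝ) (hVsmooth : ContDiff ℝ (⊤ : ℕ∞) V)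
    (hVell : ∃ C : ℝ, 1 ≤ C ∧ ∃ r₀ > 0, ∀ x, r₀ ≤ ‖x‖ →
      C⁻¹ * jap x ^ (2 * m) ≤ V x ∧ V x ≤ C * jap x ^ (2 * m))
    (hVder : ∀ k : ℕ, ∃ Ck > 0, ∀ x,
      ‖iteratedFDeriv ℝ k V x‖ ≤ Ck * jap x ^ (2 * m - k))
    (φ : ℝ → EuclideanSpace ℝ (Fin d) × EuclideanSpace ℝ (Fin d) →
      EuclideanSpace ℝ (Fin d) × EuclideanSpace ℝ (Fin d))
    (hφ : IsFlowV d V φ) :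
    ((1 / 2 : ℝ) ≤ m → ∃ C > 0, ∃ E₀ > 0, ∀ E : ℝ, E₀ ≤ E → ∀ r : ℝ, 0 ≤ r →
      ∀ ρ : EuclideanSpace ℝ (Fin d) × EuclideanSpace ℝ (Fin d),
        V ρ.1 + ‖ρ.2‖ ^ 2 / 2 = E →
        volume {t : ℝ | t ∈ Set.Icc 0 (E ^ ((1 / 2 : ℝ) * (1 / m - 1))) ∧ ‖(φ t ρ).1‖ < r}
          ≤ ENNReal.ofReal (C * r / Real.sqrt E)) ∧
    (m < 1 / 2 → ∀ ε : ℝ, 0 < ε → ε < (1 / 2 : ℝ) * (1 / m - 1) →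
      ∃ C > 0, ∃ E₀ > 0, ∀ E : ℝ, E₀ ≤ E → ∀ r : ℝ, 0 ≤ r →
      ∀ ρ : EuclideanSpace ℝ (Fin d) × EuclideanSpace ℝ (Fin d),
        V ρ.1 + ‖ρ.2‖ ^ 2 / 2 = E →
        volume {t : ℝ | t ∈ Set.Icc 0 (E ^ ((1 / 2 : ℝ) * (1 / m - 1) - ε)) ∧ ‖(φ t ρ).1‖ < r}
          ≤ ENNReal.ofReal (C * r / Real.sqrt E)) := by
  obtain ⟨C, hC, E₀, hE₀, H⟩ := master d m hm V hVsmooth hVell hVder φ hφ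
  constructor
  · intro _
    exact ⟨C, hC, E₀, hE₀, fun E hE r hr ρ hρ => H _ le_rfl E hE r hr ρ hρ⟩
  · intro _ ε hε _
    exact ⟨C, hC, E₀, hE₀, fun E hE r hr ρ hρ => H _ (by linarith) E hE r hr ρ hρ⟩

end
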